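/- (Proposition 2.2.) Let 𝓗 be a finite-dimensional complex inner product space, let ψ̄₁,…,ψ̄_m : [0,T] → 𝓗 and ψ̃₁,…,ψ̃_m : [0,T] → 𝓗 be differentiable curves such that for every t ∈ [0,T] both {ψ̄_k(t)} and {ψ̃_k(t)} are orthonormal families spanning the same subspace of 𝓗, ⟨ψ̄_p(t), (d/dt)ψ̃_k(t)⟩ = 0 for all p, k, t, and ψ̄_k(T) = ψ̄_k(0) = ψ̃_k(0) =: ψ_k for all k. Then the matrix G with entries G_{p k} := ⟨ψ_p, ψ̃_k(T)⟩ is unitary and G = V̄(T), where V̄ is the unique solution of i·V̄′(t) = −A(t)·V̄(t) with V̄(0) = 1 and A(t)_{p k} := i·⟨ψ̄_p(t), (d/dt)ψ̄_k(t)⟩. In particular, G is determined by the curves ψ̄₁,…,ψ̄_m alone. -/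

import Mathlib

open Matrix Finset in
private lemma aux_deriv_zero (m : ℕ) (T : ℝ)
    (A : ℝ → Matrix (Fin m) (Fin m) ℂ)
    (hherm : ∀ t ∈ Set.Icc (0:ℝ) T, ∀ p q, (starRingEnd ℂ) (A t p q) = A t q p)
    (Vb Vb' : ℝ → Matrix (Fin m) (Fin m) ℂ)
    (hVbderiv : ∀ t ∈ Set.Icc (0:ℝ) T, ∀ p k, HasDerivAt (fun s => Vb s p k) (Vb' t p k) t)
    (hVb' : ∀ t ∈ Set.Icc (0:ℝ) T, ∀ p k,
      Vb' t p k = Complex.I * ∑ q, A t p q * Vb t q k)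
    (u : Fin m → ℝ → ℂ)
    (hu : ∀ t ∈ Set.Icc (0:ℝ) T, ∀ q,
      HasDerivAt (u q) (∑ r, Complex.I * A t q r * u r t) t)
    (p : Fin m) (t : ℝ) (ht : t ∈ Set.Icc (0:ℝ) T) :
    HasDerivAt (fun s => ∑ q, (starRingEnd ℂ) (Vb s q p) * u q s) 0 t := by
  have hterm : ∀ q : Fin m, HasDerivAt (fun s => (starRingEnd ℂ) (Vb s q p) * u q s)
      ((starRingEnd ℂ) (Vb' t q p) * u q t
        + (starRingEnd ℂ) (Vb t q p) * (∑ r, Complex.I * A t q r * u r t)) t := by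
    intro q
    exact ((hVbderiv t ht q p).star).mul (hu t ht q)
  have hsum := HasDerivAt.fun_sum (fun q (_ : q ∈ Finset.univ) => hterm q)
  have hzero : (∑ q, ((starRingEnd ℂ) (Vb' t q p) * u q t
      + (starRingEnd ℂ) (Vb t q p) * (∑ r, Complex.I * A t q r * u r t))) = 0 := by
    rw [Finset.sum_add_distrib]
    have h1 : ∑ q, (starRingEnd ℂ) (Vb' t q p) * u q t
        = ∑ q, ∑ r, (-Complex.I) * A t r q * (starRingEnd ℂ) (Vb t r p) * u q t := by
      refine Finset.sum_congr rfl fun q _ => ?_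
      rw [hVb' t ht q p, _root_.map_mul, map_sum, Complex.conj_I, Finset.mul_sum, Finset.sum_mul]
      refine Finset.sum_congr rfl fun r _ => ?_
      rw [_root_.map_mul, hherm t ht q r]; ring
    have h2 : ∑ q, (starRingEnd ℂ) (Vb t q p) * (∑ r, Complex.I * A t q r * u r t)
        = ∑ q, ∑ r, Complex.I * A t r q * (starRingEnd ℂ) (Vb t r p) * u q t := by
      calc ∑ q, (starRingEnd ℂ) (Vb t q p) * (∑ r, Complex.I * A t q r * u r t)
          = ∑ q, ∑ r, (starRingEnd ℂ) (Vb t q p) * (Complex.I * A t q r * u r t) := by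
            simp [Finset.mul_sum]
        _ = ∑ r, ∑ q, (starRingEnd ℂ) (Vb t q p) * (Complex.I * A t q r * u r t) :=
            Finset.sum_comm
        _ = ∑ q, ∑ r, Complex.I * A t r q * (starRingEnd ℂ) (Vb t r p) * u q t := by
            refine Finset.sum_congr rfl fun q _ => Finset.sum_congr rfl fun r _ => by ring
    rw [h1, h2, ← Finset.sum_add_distrib]
    refine Finset.sum_eq_zero fun q _ => ?_
    rw [← Finset.sum_add_distrib]
    exact Finset.sum_eq_zero fun r _ => by ring
  exact hzero ▸ hsum

open Matrix in
/-- Proposition 2.2: the non-Abelian observable-geometric phase `G_{pk} = ⟨ψ_p, ψ̃_k(T)⟩`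
is unitary and equals `V̄(T)`, where `V̄` solves `i·V̄′ = −A·V̄`, `V̄(0) = 1`, with
`A(t)_{pk} = i⟨ψ̄_p(t), ψ̄_k′(t)⟩`; in particular `G` is determined by the curves `ψ̄_k`
alone. -/
theorem nonabelian_geometric_phase_eq_holonomy
    {𝓗 : Type*} [NormedAddCommGroup 𝓗] [InnerProductSpace ℂ 𝓗] [FiniteDimensional ℂ 𝓗]
    (m : ℕ) (T : ℝ) (hT : 0 < T)
    (ψbar ψbar' ψtil ψtil' : Fin m → ℝ → 𝓗)
    (hbderiv : ∀ k, ∀ t ∈ Set.Icc (0:ℝ) T, HasDerivAt (ψbar k) (ψbar' k t) t)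
    (htderiv : ∀ k, ∀ t ∈ Set.Icc (0:ℝ) T, HasDerivAt (ψtil k) (ψtil' k t) t)
    (hbon : ∀ t ∈ Set.Icc (0:ℝ) T, Orthonormal ℂ (fun k => ψbar k t))
    (hton : ∀ t ∈ Set.Icc (0:ℝ) T, Orthonormal ℂ (fun k => ψtil k t))
    (hspan : ∀ t ∈ Set.Icc (0:ℝ) T,
      Submodule.span ℂ (Set.range fun k => ψbar k t)
        = Submodule.span ℂ (Set.range fun k => ψtil k t))
    (hpar : ∀ t ∈ Set.Icc (0:ℝ) T, ∀ p k, (inner ℂ (ψbar p t) (ψtil' k t) : ℂ) = 0)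
    (ψ : Fin m → 𝓗)
    (hclosed : ∀ k, ψbar k T = ψ k ∧ ψbar k 0 = ψ k ∧ ψtil k 0 = ψ k)
    (A : ℝ → Matrix (Fin m) (Fin m) ℂ)
    (hA : ∀ t p k, A t p k = Complex.I * (inner ℂ (ψbar p t) (ψbar' k t) : ℂ))
    (Vb Vb' : ℝ → Matrix (Fin m) (Fin m) ℂ)
    (hVb0 : Vb 0 = 1)
    (hVbderiv : ∀ t ∈ Set.Icc (0:ℝ) T, ∀ p k, HasDerivAt (fun s => Vb s p k) (Vb' t p k) t)
    (hVbode : ∀ t ∈ Set.Icc (0:ℝ) T, Complex.I • Vb' t = -(A t * Vb t))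
    (G : Matrix (Fin m) (Fin m) ℂ)
    (hG : ∀ p k, G p k = (inner ℂ (ψ p) (ψtil k T) : ℂ)) :
    (Gᴴ * G = 1 ∧ G * Gᴴ = 1) ∧ G = Vb T := by
  classical
  have h0mem : (0:ℝ) ∈ Set.Icc (0:ℝ) T := ⟨le_refl _, hT.le⟩
  have hTmem : T ∈ Set.Icc (0:ℝ) T := ⟨hT.le, le_refl _⟩
  set w : Fin m → Fin m → ℝ → ℂ := fun p k t => inner ℂ (ψbar p t) (ψtil k t) with hwdef
  -- skew-symmetry relation: ⟪ψbar' p, ψbar q⟫ = I * A t p q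
  have hskew : ∀ t ∈ Set.Icc (0:ℝ) T, ∀ p q,
      (inner ℂ (ψbar' p t) (ψbar q t) : ℂ) = Complex.I * A t p q := by
    intro t ht p q
    have hd : HasDerivAt (fun s => (inner ℂ (ψbar p s) (ψbar q s) : ℂ))
        ((inner ℂ (ψbar p t) (ψbar' q t) : ℂ) + inner ℂ (ψbar' p t) (ψbar q t)) t :=
      HasDerivAt.inner ℂ (hbderiv p t ht) (hbderiv q t ht)
    have h1 : HasDerivWithinAt (fun s => (inner ℂ (ψbar p s) (ψbar q s) : ℂ))
        ((inner ℂ (ψbar p t) (ψbar' q t) : ℂ) + inner ℂ (ψbar' p t) (ψbar q t))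
        (Set.Icc 0 T) t := hd.hasDerivWithinAt
    have hconst : Set.EqOn (fun s => (inner ℂ (ψbar p s) (ψbar q s) : ℂ))
        (fun _ => if p = q then (1:ℂ) else 0) (Set.Icc 0 T) := by
      intro s hs
      exact (orthonormal_iff_ite.mp (hbon s hs)) p q
    have h2 : HasDerivWithinAt (fun s => (inner ℂ (ψbar p s) (ψbar q s) : ℂ)) 0
        (Set.Icc 0 T) t :=
      (hasDerivWithinAt_const t _ _).congr hconst (hconst ht)
    have hu := uniqueDiffOn_Icc hT t ht
    have hz : (inner ℂ (ψbar p t) (ψbar' q t) : ℂ) + inner ℂ (ψbar' p t) (ψbar q t) = 0 := by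
      rw [← h1.derivWithin hu, h2.derivWithin hu]
    have hAe := hA t p q
    linear_combination hz + (-Complex.I) * hAe
      + (-(inner ℂ (ψbar p t) (ψbar' q t) : ℂ)) * Complex.I_mul_I
  -- Hermiticity of A on [0, T]
  have hherm : ∀ t ∈ Set.Icc (0:ℝ) T, ∀ p q, (starRingEnd ℂ) (A t p q) = A t q p := by
    intro t ht p q
    rw [hA t p q, _root_.map_mul, Complex.conj_I, inner_conj_symm, hskew t ht q p]
    linear_combination (-(A t q p)) * Complex.I_mul_I
  -- entrywise form of the ODE for Vb
  have hVb' : ∀ t ∈ Set.Icc (0:ℝ) T, ∀ p k,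
      Vb' t p k = Complex.I * ∑ q, A t p q * Vb t q k := by
    intro t ht p k
    have h := congrFun (congrFun (hVbode t ht) p) k
    simp only [Matrix.smul_apply, Matrix.neg_apply, Matrix.mul_apply, smul_eq_mul] at h
    apply mul_left_cancel₀ Complex.I_ne_zero
    rw [h, ← mul_assoc, Complex.I_mul_I]
    ring
  -- expansion of ψtil in the ψbar basis
  have hexp : ∀ t ∈ Set.Icc (0:ℝ) T, ∀ k,
      ψtil k t = ∑ q, w q k t • ψbar q t := by
    intro t ht k
    have hmem : ψtil k t ∈ Submodule.span ℂ (Set.range fun q => ψbar q t) := by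
      rw [hspan t ht]
      exact Submodule.subset_span (Set.mem_range_self k)
    obtain ⟨c, hc⟩ := (Submodule.mem_span_range_iff_exists_fun ℂ).mp hmem
    have hcoef : ∀ q, w q k t = c q := by
      intro q
      have := (hbon t ht).inner_right_fintype c q
      rw [hc] at this
      simpa [hwdef] using this
    rw [← hc]
    exact Finset.sum_congr rfl fun q _ => by rw [hcoef q]
  -- derivative of w
  have hwd : ∀ t ∈ Set.Icc (0:ℝ) T, ∀ p k,
      HasDerivAt (fun s => w p k s) (∑ q, Complex.I * A t p q * w q k t) t := by
    intro t ht p k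
    have hd : HasDerivAt (fun s => (inner ℂ (ψbar p s) (ψtil k s) : ℂ))
        ((inner ℂ (ψbar p t) (ψtil' k t) : ℂ) + inner ℂ (ψbar' p t) (ψtil k t)) t :=
      HasDerivAt.inner ℂ (hbderiv p t ht) (htderiv k t ht)
    have hval : (inner ℂ (ψbar p t) (ψtil' k t) : ℂ) + inner ℂ (ψbar' p t) (ψtil k t)
        = ∑ q, Complex.I * A t p q * w q k t := by
      rw [hpar t ht p k, zero_add]
      conv_lhs => rw [hexp t ht k]
      rw [inner_sum]
      refine Finset.sum_congr rfl fun q _ => ?_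
      rw [inner_smul_right, hskew t ht p q]
      ring
    exact hval ▸ hd
  -- the two "conserved" quantities
  have hkey : ∀ (u : Fin m → ℝ → ℂ),
      (∀ t ∈ Set.Icc (0:ℝ) T, ∀ q,
        HasDerivAt (u q) (∑ r, Complex.I * A t q r * u r t) t) →
      ∀ p : Fin m, (∑ q, (starRingEnd ℂ) (Vb T q p) * u q T)
        = ∑ q, (starRingEnd ℂ) (Vb 0 q p) * u q 0 := by
    intro u hu p
    have hder : ∀ t ∈ Set.Icc (0:ℝ) T,
        HasDerivAt (fun s => ∑ q, (starRingEnd ℂ) (Vb s q p) * u q s) 0 t := by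
      intro t ht
      exact aux_deriv_zero m T A hherm Vb Vb' hVbderiv hVb' u hu p t ht
    have hcont : ContinuousOn (fun s => ∑ q, (starRingEnd ℂ) (Vb s q p) * u q s)
        (Set.Icc 0 T) := fun t ht => (hder t ht).continuousAt.continuousWithinAt
    have := constant_of_has_deriv_right_zero hcont
      (fun x hx => ((hder x (Set.mem_Icc_of_Ico hx)).hasDerivWithinAt)) T hTmem
    exact this
  -- w satisfies the hypotheses of hkey for each fixed column k
  have hVhermG : ∀ p k, (∑ q, (starRingEnd ℂ) (Vb T q p) * w q k T)
      = if k = p then 1 else 0 := by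
    intro p k
    have := hkey (fun q => w q k) (fun t ht q => hwd t ht q k) p
    rw [this, hVb0]
    have hw0 : ∀ q, w q k 0 = if q = k then (1:ℂ) else 0 := by
      intro q
      have := (orthonormal_iff_ite.mp (hbon 0 h0mem)) q k
      simpa [hwdef, (hclosed q).2.1, (hclosed k).2.1, (hclosed q).2.2, (hclosed k).2.2]
        using this
    simp [hw0, Matrix.one_apply]
  have hVhermV : ∀ p k, (∑ q, (starRingEnd ℂ) (Vb T q p) * Vb T q k)
      = if k = p then 1 else 0 := by
    intro p k
    have hu : ∀ t ∈ Set.Icc (0:ℝ) T, ∀ q,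
        HasDerivAt (fun s => Vb s q k) (∑ r, Complex.I * A t q r * Vb t r k) t := by
      intro t ht q
      have hv := hVbderiv t ht q k
      have : Vb' t q k = ∑ r, Complex.I * A t q r * Vb t r k := by
        rw [hVb' t ht q k, Finset.mul_sum]
        exact Finset.sum_congr rfl fun r _ => by ring
      exact this ▸ hv
    have := hkey (fun q s => Vb s q k) hu p
    rw [this, hVb0]
    simp [Matrix.one_apply]
  -- translate into matrix identities
  have hGW : ∀ p k, G p k = w p k T := by
    intro p k
    rw [hG p k, ← (hclosed p).1]
  have hVG : (Vb T)ᴴ * G = 1 := by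
    ext p k
    rw [Matrix.mul_apply]
    simp only [Matrix.conjTranspose_apply]
    calc ∑ q, (starRingEnd ℂ) (Vb T q p) * G q k
        = ∑ q, (starRingEnd ℂ) (Vb T q p) * w q k T :=
          Finset.sum_congr rfl fun q _ => by rw [hGW q k]
      _ = if k = p then 1 else 0 := hVhermG p k
      _ = (1 : Matrix (Fin m) (Fin m) ℂ) p k := by
          rw [Matrix.one_apply]
          simp [eq_comm]
  have hVV : (Vb T)ᴴ * Vb T = 1 := by
    ext p k
    rw [Matrix.mul_apply]
    simp only [Matrix.conjTranspose_apply]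
    calc ∑ q, star (Vb T q p) * Vb T q k
        = ∑ q, (starRingEnd ℂ) (Vb T q p) * Vb T q k := rfl
      _ = if k = p then 1 else 0 := hVhermV p k
      _ = (1 : Matrix (Fin m) (Fin m) ℂ) p k := by
          rw [Matrix.one_apply]; simp [eq_comm]
  have hVVc : Vb T * (Vb T)ᴴ = 1 := mul_eq_one_comm.mp hVV
  have hGV : G = Vb T := by
    calc G = 1 * G := (one_mul G).symm
      _ = (Vb T * (Vb T)ᴴ) * G := by rw [hVVc]
      _ = Vb T * ((Vb T)ᴴ * G) := by rw [Matrix.mul_assoc]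
      _ = Vb T * 1 := by rw [hVG]
      _ = Vb T := mul_one _
  refine ⟨⟨?_, ?_⟩, hGV⟩
  · rw [hGV]; exact hVV
  · rw [hGV]; exact hVVc
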